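/- Let c ∈ (0,1), σ² > 0 and P_a > 0, and define m(ρ) = −2 / (1 − c − ρ − √((1 − c + ρ)² + 4cρ)) and g(ρ) = −ρ²·m′(ρ) + (σ²/P_a)·(m(ρ) + ρ·m′(ρ)) for ρ > 0. Then g is differentiable at ρ = σ²/P_a with g′(σ²/P_a) = 0, and ρ* = σ²/P_a is a global minimizer of g on (0, ∞); equivalently, the deterministic-equivalent SINR, SINR̄(ρ) = 1/g(ρ), is maximized over (0, ∞) at ρ* = σ²/P_a. -/

import Mathlib

/-- The Marchenko–Pastur-type Stieltjes function
`m(ρ) = −2 / (1 − c − ρ − √((1 − c + ρ)² + 4cρ))`. -/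
noncomputable def mMP (c ρ : ℝ) : ℝ :=
  -2 / (1 - c - ρ - Real.sqrt ((1 - c + ρ) ^ 2 + 4 * c * ρ))

/-- The reciprocal of the deterministic-equivalent SINR in the uncorrelated case:
`g(ρ) = −ρ² m′(ρ) + (σ²/P_a)(m(ρ) + ρ m′(ρ))`. -/
noncomputable def gSINR (c σ2 Pa ρ : ℝ) : ℝ :=
  -(ρ ^ 2) * deriv (mMP c) ρ + (σ2 / Pa) * (mMP c ρ + ρ * deriv (mMP c) ρ)

namespace Stmt9Aux

noncomputable def sA (c ρ : ℝ) : ℝ := Real.sqrt ((1 - c + ρ) ^ 2 + 4 * c * ρ)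
noncomputable def uA (c ρ : ℝ) : ℝ := ρ + c - 1 + sA c ρ
noncomputable def vA (c ρ : ℝ) : ℝ := 1 + (1 + c + ρ) / sA c ρ
noncomputable def M1 (c ρ : ℝ) : ℝ := -2 * vA c ρ / (uA c ρ) ^ 2

variable {c ρ x y : ℝ}

lemma q_pos (hc0 : 0 < c) (hρ : 0 < ρ) : 0 < (1 - c + ρ) ^ 2 + 4 * c * ρ := by
  nlinarith [sq_nonneg (1 - c + ρ)]

lemma sA_pos (hc0 : 0 < c) (hρ : 0 < ρ) : 0 < sA c ρ :=
  Real.sqrt_pos.2 (q_pos hc0 hρ)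

lemma sA_sq (hc0 : 0 < c) (hρ : 0 < ρ) : sA c ρ ^ 2 = (1 - c + ρ) ^ 2 + 4 * c * ρ :=
  Real.sq_sqrt (q_pos hc0 hρ).le

lemma uA_pos (hc0 : 0 < c) (hρ : 0 < ρ) : 0 < uA c ρ := by
  have h1 := sA_pos hc0 hρ
  have h2 := sA_sq hc0 hρ
  unfold uA
  nlinarith

lemma vA_pos (hc0 : 0 < c) (hρ : 0 < ρ) : 0 < vA c ρ := by
  have h1 := sA_pos hc0 hρ
  have : 0 < (1 + c + ρ) / sA c ρ := by positivity
  unfold vA; linarith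

lemma M1_neg (hc0 : 0 < c) (hρ : 0 < ρ) : M1 c ρ < 0 := by
  have h1 := vA_pos hc0 hρ
  have h2 := uA_pos hc0 hρ
  unfold M1
  apply div_neg_of_neg_of_pos <;> nlinarith

lemma mMP_eq (hc0 : 0 < c) (hρ : 0 < ρ) : mMP c ρ = 2 / uA c ρ := by
  have h : 1 - c - ρ - Real.sqrt ((1 - c + ρ) ^ 2 + 4 * c * ρ) = -(uA c ρ) := by
    unfold uA sA; ring
  rw [mMP, h]
  rw [show (-2 : ℝ) = -(2) by norm_num, neg_div_neg_eq]

lemma mMP_pos (hc0 : 0 < c) (hρ : 0 < ρ) : 0 < mMP c ρ := by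
  rw [mMP_eq hc0 hρ]
  exact div_pos two_pos (uA_pos hc0 hρ)

lemma hasDerivAt_sA (hc0 : 0 < c) (hρ : 0 < ρ) :
    HasDerivAt (sA c) ((1 + c + ρ) / sA c ρ) ρ := by
  have hq : HasDerivAt (fun x => (1 - c + x) ^ 2 + 4 * c * x)
      (2 * (1 - c + ρ) ^ 1 * 1 + 4 * c * 1) ρ :=
    (((hasDerivAt_id ρ).const_add (1 - c)).pow 2).add ((hasDerivAt_id ρ).const_mul (4 * c))
  have hne : (1 - c + ρ) ^ 2 + 4 * c * ρ ≠ 0 := (q_pos hc0 hρ).ne'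
  have h := hq.sqrt hne
  have hs := sA_pos hc0 hρ
  convert h using 1
  · rfl
  rw [show Real.sqrt ((1 - c + ρ) ^ 2 + 4 * c * ρ) = sA c ρ from rfl]
  field_simp
  ring

lemma hasDerivAt_uA (hc0 : 0 < c) (hρ : 0 < ρ) :
    HasDerivAt (uA c) (vA c ρ) ρ := by
  have h : HasDerivAt (fun x => x + c - 1 + sA c x) (1 + (1 + c + ρ) / sA c ρ) ρ := by
    exact ((((hasDerivAt_id ρ).add_const c).sub_const 1).add (hasDerivAt_sA hc0 hρ))
  exact h

lemma hasDerivAt_twoDivU (hc0 : 0 < c) (hρ : 0 < ρ) :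
    HasDerivAt (fun x => 2 / uA c x) (M1 c ρ) ρ := by
  have hu := hasDerivAt_uA hc0 hρ
  have hune := (uA_pos hc0 hρ).ne'
  have h := (hasDerivAt_const ρ (2 : ℝ)).div hu hune
  refine h.congr_deriv ?_
  unfold M1
  field_simp
  ring

lemma hasDerivAt_mMP (hc0 : 0 < c) (hρ : 0 < ρ) :
    HasDerivAt (mMP c) (M1 c ρ) ρ := by
  have heq : mMP c =ᶠ[nhds ρ] fun x => 2 / uA c x :=
    Filter.eventuallyEq_of_mem (Ioi_mem_nhds hρ) fun x hx => mMP_eq hc0 hx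
  exact (hasDerivAt_twoDivU hc0 hρ).congr_of_eventuallyEq heq

lemma deriv_mMP (hc0 : 0 < c) (hρ : 0 < ρ) : deriv (mMP c) ρ = M1 c ρ :=
  (hasDerivAt_mMP hc0 hρ).deriv

lemma sA_mono (hc0 : 0 < c) (hc1 : c < 1) (hx : 0 < x) (hxy : x < y) :
    sA c x < sA c y := by
  apply Real.sqrt_lt_sqrt (q_pos hc0 hx).le
  nlinarith

lemma uA_mono (hc0 : 0 < c) (hc1 : c < 1) (hx : 0 < x) (hxy : x < y) :
    uA c x < uA c y := by
  have := sA_mono hc0 hc1 hx hxy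
  unfold uA; linarith

lemma vA_anti (hc0 : 0 < c) (hc1 : c < 1) (hx : 0 < x) (hxy : x < y) :
    vA c y < vA c x := by
  have hy : 0 < y := hx.trans hxy
  have hsx := sA_pos hc0 hx
  have hsy := sA_pos hc0 hy
  have hsx2 := sA_sq hc0 hx
  have hsy2 := sA_sq hc0 hy
  have key : (1 + c + y) / sA c y < (1 + c + x) / sA c x := by
    rw [div_lt_div_iff₀ hsy hsx]
    have h1 : 0 < (1 + c + y) * sA c x := by positivity
    have h2 : 0 < (1 + c + x) * sA c y := by positivity
    have hsq : ((1 + c + y) * sA c x) ^ 2 < ((1 + c + x) * sA c y) ^ 2 := by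
      have hxx : sA c x ^ 2 = (1 + c + x) ^ 2 - 4 * c := by rw [hsx2]; ring
      have hyy : sA c y ^ 2 = (1 + c + y) ^ 2 - 4 * c := by rw [hsy2]; ring
      have ht : (1 + c + x) ^ 2 < (1 + c + y) ^ 2 := by nlinarith
      calc ((1 + c + y) * sA c x) ^ 2 = (1 + c + y) ^ 2 * ((1 + c + x) ^ 2 - 4 * c) := by
            rw [mul_pow, hxx]
        _ < (1 + c + x) ^ 2 * ((1 + c + y) ^ 2 - 4 * c) := by nlinarith
        _ = ((1 + c + x) * sA c y) ^ 2 := by rw [mul_pow, hyy]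
    exact lt_of_pow_lt_pow_left₀ 2 h2.le hsq
  unfold vA; linarith

lemma M1_mono (hc0 : 0 < c) (hc1 : c < 1) (hx : 0 < x) (hxy : x < y) :
    M1 c x < M1 c y := by
  have hy : 0 < y := hx.trans hxy
  have hvx := vA_pos hc0 hx
  have hvy := vA_pos hc0 hy
  have hux := uA_pos hc0 hx
  have huy := uA_pos hc0 hy
  have hva := vA_anti hc0 hc1 hx hxy
  have hum := uA_mono hc0 hc1 hx hxy
  unfold M1
  rw [div_lt_div_iff₀ (by positivity) (by positivity)]
  have h1 : vA c y * uA c x ^ 2 < vA c x * uA c x ^ 2 :=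
    mul_lt_mul_of_pos_right hva (pow_pos hux 2)
  have h2 : vA c x * uA c x ^ 2 < vA c x * uA c y ^ 2 :=
    mul_lt_mul_of_pos_left (pow_lt_pow_left₀ hum hux.le (n := 2) two_ne_zero) hvx
  nlinarith

lemma tangent (hc0 : 0 < c) (hc1 : c < 1) (hx : 0 < x) (hy : 0 < y) :
    mMP c x + M1 c x * (y - x) ≤ mMP c y := by
  rcases lt_trichotomy x y with h | h | h
  · obtain ⟨ξ, hξ, hslope⟩ := exists_hasDerivAt_eq_slope (mMP c) (M1 c) h
      (fun z hz => (hasDerivAt_mMP hc0 (lt_of_lt_of_le hx hz.1)).continuousAt.continuousWithinAt)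
      (fun z hz => hasDerivAt_mMP hc0 (hx.trans hz.1))
    have hm : M1 c x < M1 c ξ := M1_mono hc0 hc1 hx hξ.1
    have h1 : M1 c ξ * (y - x) = mMP c y - mMP c x := by
      rw [hslope]; exact div_mul_cancel₀ _ (sub_ne_zero.2 h.ne')
    nlinarith
  · subst h; simp
  · obtain ⟨ξ, hξ, hslope⟩ := exists_hasDerivAt_eq_slope (mMP c) (M1 c) h
      (fun z hz => (hasDerivAt_mMP hc0 (lt_of_lt_of_le hy hz.1)).continuousAt.continuousWithinAt)
      (fun z hz => hasDerivAt_mMP hc0 (hy.trans hz.1))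
    have hm : M1 c ξ < M1 c x := M1_mono hc0 hc1 (hy.trans hξ.1) hξ.2
    have h1 : M1 c ξ * (x - y) = mMP c x - mMP c y := by
      rw [hslope]; exact div_mul_cancel₀ _ (sub_ne_zero.2 h.ne')
    nlinarith




noncomputable def M1d (c ρ : ℝ) : ℝ :=
  (8 * c * uA c ρ / (sA c ρ) ^ 3 + 4 * (vA c ρ) ^ 2) / (uA c ρ) ^ 3

variable {c σ2 Pa ρ x y : ℝ}

lemma hasDerivAt_vA (hc0 : 0 < c) (hρ : 0 < ρ) :
    HasDerivAt (vA c) (-(4 * c) / (sA c ρ) ^ 3) ρ := by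
  have hs := sA_pos hc0 hρ
  have hs2 := sA_sq hc0 hρ
  have ht : HasDerivAt (fun x : ℝ => 1 + c + x) 1 ρ := by
    simpa using (hasDerivAt_id ρ).const_add (1 + c)
  have h := ((ht.div (hasDerivAt_sA hc0 hρ) hs.ne').const_add 1)
  have heq : (1 * sA c ρ - (1 + c + ρ) * ((1 + c + ρ) / sA c ρ)) / (sA c ρ) ^ 2
      = -(4 * c) / (sA c ρ) ^ 3 := by
    field_simp
    linear_combination hs2
  rw [heq] at h
  exact h

lemma hasDerivAt_M1 (hc0 : 0 < c) (hρ : 0 < ρ) :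
    HasDerivAt (M1 c) (M1d c ρ) ρ := by
  have hs := sA_pos hc0 hρ
  have hu := uA_pos hc0 hρ
  have h := ((hasDerivAt_vA hc0 hρ).const_mul (-2)).div
    ((hasDerivAt_uA hc0 hρ).pow 2) (pow_ne_zero 2 hu.ne')
  refine h.congr_deriv ?_
  unfold M1d
  push_cast
  simp only [Pi.pow_apply]
  field_simp
  ring

lemma k_neg' (c ρ s : ℝ) (hc0 : 0 < c) (hρ : 0 < ρ) (hs : 0 < s)
    (hs2 : s ^ 2 = (1 - c + ρ) ^ 2 + 4 * c * ρ) (hu : 0 < ρ + c - 1 + s) :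
    2 * (-2 * (1 + (1 + c + ρ) / s) / (ρ + c - 1 + s) ^ 2)
      + ρ * ((8 * c * (ρ + c - 1 + s) / s ^ 3 + 4 * (1 + (1 + c + ρ) / s) ^ 2)
          / (ρ + c - 1 + s) ^ 3) < 0 := by
  set A2 : ℝ := (ρ + c - 1) * ((ρ + c) ^ 2 + (ρ + c) + 1 - 3 * c) with hA2
  set B2 : ℝ := ρ ^ 2 + (2 * c - 1) * ρ + (1 - c) ^ 2 with hB2
  have hB2pos : 0 < B2 := by
    rcases le_or_gt c (3/4 : ℝ) with h | h
    · nlinarith [sq_nonneg (2 * ρ + 2 * c - 1)]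
    · nlinarith [sq_nonneg (ρ + 1 - c)]
  have hD : B2 ^ 2 * s ^ 2 - A2 ^ 2 = 4 * ρ ^ 3 := by
    rw [hs2, hA2, hB2]; ring
  have hprod : (A2 + B2 * s) * (B2 * s - A2) = 4 * ρ ^ 3 := by
    linear_combination hD
  have hApB : 0 < A2 + B2 * s := by
    nlinarith [mul_pos hB2pos hs, pow_pos hρ 3]
  have hW : (s + (1 + c + ρ)) * (ρ + c - 1 + s) * s ^ 2 - 2 * c * ρ * (ρ + c - 1 + s)
      - ρ * (s + (1 + c + ρ)) ^ 2 * s = 2 * c * (A2 + B2 * s) := by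
    rw [hA2, hB2]
    linear_combination (s ^ 2 + ρ * s - 2 * c + 2 * c * s + 2 * c * ρ + 2 * c ^ 2) * hs2
  have e1 : 2 * (-2 * (1 + (1 + c + ρ) / s) / (ρ + c - 1 + s) ^ 2)
      + ρ * ((8 * c * (ρ + c - 1 + s) / s ^ 3 + 4 * (1 + (1 + c + ρ) / s) ^ 2)
          / (ρ + c - 1 + s) ^ 3)
      = -4 * ((s + (1 + c + ρ)) * (ρ + c - 1 + s) * s ^ 2 - 2 * c * ρ * (ρ + c - 1 + s)
          - ρ * (s + (1 + c + ρ)) ^ 2 * s) / ((ρ + c - 1 + s) ^ 3 * s ^ 3) := by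
    field_simp
    ring
  rw [e1, hW]
  apply div_neg_of_neg_of_pos
  · nlinarith [mul_pos hc0 hApB]
  · positivity

lemma k_neg (hc0 : 0 < c) (hρ : 0 < ρ) :
    2 * M1 c ρ + ρ * M1d c ρ < 0 := by
  have h := k_neg' c ρ (sA c ρ) hc0 hρ (sA_pos hc0 hρ) (sA_sq hc0 hρ)
    (by have := uA_pos hc0 hρ; unfold uA at this; exact this)
  unfold M1 M1d vA uA
  exact h

lemma hasDerivAt_gSINR (hc0 : 0 < c) (hρ : 0 < ρ) :
    HasDerivAt (gSINR c σ2 Pa) ((σ2 / Pa - ρ) * (2 * M1 c ρ + ρ * M1d c ρ)) ρ := by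
  have hM := hasDerivAt_mMP hc0 hρ
  have hM1' := hasDerivAt_M1 hc0 hρ
  have h1 : HasDerivAt (fun x : ℝ => -(x ^ 2)) (-(2 * ρ ^ (2 - 1))) ρ :=
    (hasDerivAt_pow 2 ρ).neg
  have ha := h1.mul hM1'
  have hb := (hM.add ((hasDerivAt_id ρ).mul hM1')).const_mul (σ2 / Pa)
  have hG := ha.add hb
  have hGeq : gSINR c σ2 Pa =ᶠ[nhds ρ]
      fun x => -(x ^ 2) * M1 c x + (σ2 / Pa) * (mMP c x + x * M1 c x) := by
    refine Filter.eventuallyEq_of_mem (Ioi_mem_nhds hρ) fun x hx => ?_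
    have hx' : (0 : ℝ) < x := hx
    rw [gSINR, deriv_mMP hc0 hx']
  have h := hG.congr_of_eventuallyEq hGeq
  refine h.congr_deriv ?_
  simp only [id_eq]
  ring

theorem stmt9' (c σ2 Pa : ℝ) (hc0 : 0 < c) (hc1 : c < 1) (hσ2 : 0 < σ2) (hPa : 0 < Pa) :
    DifferentiableAt ℝ (gSINR c σ2 Pa) (σ2 / Pa) ∧
    deriv (gSINR c σ2 Pa) (σ2 / Pa) = 0 ∧
    (∀ ρ ∈ Set.Ioi (0 : ℝ), gSINR c σ2 Pa (σ2 / Pa) ≤ gSINR c σ2 Pa ρ) ∧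
    (∀ ρ ∈ Set.Ioi (0 : ℝ), 1 / gSINR c σ2 Pa ρ ≤ 1 / gSINR c σ2 Pa (σ2 / Pa)) := by
  have hp : (0 : ℝ) < σ2 / Pa := div_pos hσ2 hPa
  have hdiff : DifferentiableAt ℝ (gSINR c σ2 Pa) (σ2 / Pa) :=
    (hasDerivAt_gSINR hc0 hp).differentiableAt
  have hderiv : deriv (gSINR c σ2 Pa) (σ2 / Pa) = 0 := by
    rw [(hasDerivAt_gSINR hc0 hp).deriv]; ring
  have hmin : ∀ ρ ∈ Set.Ioi (0 : ℝ), gSINR c σ2 Pa (σ2 / Pa) ≤ gSINR c σ2 Pa ρ := by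
    intro ρ hρ
    have hρ' : (0 : ℝ) < ρ := hρ
    rcases lt_trichotomy ρ (σ2 / Pa) with h | h | h
    · obtain ⟨ξ, hξ, hslope⟩ := exists_hasDerivAt_eq_slope (gSINR c σ2 Pa)
        (fun x => (σ2 / Pa - x) * (2 * M1 c x + x * M1d c x)) h
        (fun z hz => ((hasDerivAt_gSINR hc0 (lt_of_lt_of_le hρ' hz.1)
          (σ2 := σ2) (Pa := Pa)).continuousAt).continuousWithinAt)
        (fun z hz => hasDerivAt_gSINR (σ2 := σ2) (Pa := Pa) hc0 (hρ'.trans hz.1))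
      have hξ0 : (0 : ℝ) < ξ := hρ'.trans hξ.1
      have hkξ := k_neg hc0 hξ0
      have hfac : (σ2 / Pa - ξ) * (2 * M1 c ξ + ξ * M1d c ξ) < 0 := by
        have h1 : 0 < σ2 / Pa - ξ := by linarith [hξ.2]
        exact mul_neg_of_pos_of_neg h1 hkξ
      rw [hslope] at hfac
      have hd : 0 < σ2 / Pa - ρ := by linarith
      have := (div_neg_iff.mp hfac)
      rcases this with ⟨h1, h2⟩ | ⟨h1, h2⟩
      · linarith
      · linarith
    · rw [h]
    · obtain ⟨ξ, hξ, hslope⟩ := exists_hasDerivAt_eq_slope (gSINR c σ2 Pa)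
        (fun x => (σ2 / Pa - x) * (2 * M1 c x + x * M1d c x)) h
        (fun z hz => ((hasDerivAt_gSINR hc0 (lt_of_lt_of_le hp hz.1)
          (σ2 := σ2) (Pa := Pa)).continuousAt).continuousWithinAt)
        (fun z hz => hasDerivAt_gSINR (σ2 := σ2) (Pa := Pa) hc0 (hp.trans hz.1))
      have hξ0 : (0 : ℝ) < ξ := hp.trans hξ.1
      have hkξ := k_neg hc0 hξ0
      have hfac : 0 < (σ2 / Pa - ξ) * (2 * M1 c ξ + ξ * M1d c ξ) := by
        have h1 : σ2 / Pa - ξ < 0 := by linarith [hξ.1]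
        exact mul_pos_of_neg_of_neg h1 hkξ
      rw [hslope] at hfac
      have hd : 0 < ρ - σ2 / Pa := by linarith
      rcases (div_pos_iff.mp hfac) with ⟨h1, h2⟩ | ⟨h1, h2⟩
      · linarith
      · linarith
  refine ⟨hdiff, hderiv, hmin, ?_⟩
  intro ρ hρ
  have hρ' : (0 : ℝ) < ρ := hρ
  have hgp : 0 < gSINR c σ2 Pa (σ2 / Pa) := by
    have : gSINR c σ2 Pa (σ2 / Pa) = (σ2 / Pa) * mMP c (σ2 / Pa) := by
      rw [gSINR, deriv_mMP hc0 hp]; ring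
    rw [this]
    exact mul_pos hp (mMP_pos hc0 hp)
  exact one_div_le_one_div_of_le hgp (hmin ρ hρ)

end Stmt9Aux

/-- for `c ∈ (0,1)`, `σ² > 0`, `P_a > 0`, `g` is differentiable at
`ρ* = σ²/P_a` with `g′(ρ*) = 0`, `ρ*` is a global minimizer of `g` on `(0, ∞)`, and
equivalently the deterministic-equivalent SINR `1/g` is maximized on `(0,∞)` at `ρ*`. -/
theorem stmt9 (c σ2 Pa : ℝ) (hc0 : 0 < c) (hc1 : c < 1) (hσ2 : 0 < σ2) (hPa : 0 < Pa) :
    DifferentiableAt ℝ (gSINR c σ2 Pa) (σ2 / Pa) ∧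
    deriv (gSINR c σ2 Pa) (σ2 / Pa) = 0 ∧
    (∀ ρ ∈ Set.Ioi (0 : ℝ), gSINR c σ2 Pa (σ2 / Pa) ≤ gSINR c σ2 Pa ρ) ∧
    (∀ ρ ∈ Set.Ioi (0 : ℝ), 1 / gSINR c σ2 Pa ρ ≤ 1 / gSINR c σ2 Pa (σ2 / Pa)) := by
  exact Stmt9Aux.stmt9' c σ2 Pa hc0 hc1 hσ2 hPa
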